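/- Let g : ℂ → ℂ be continuous at a point p ∈ ℂ. Then g is complex-differentiable at p if and only if the function z ↦ exp(g(z)) (complex exponential) is complex-differentiable at p. Moreover, in that case g'(p) = (exp∘g)'(p) / exp(g(p)). (Complex-variable case of Theorems 4 and 5: a function f : ℂ → e^ℂ with log f = g is *differentiable at p iff log f is differentiable at p iff Pr f = exp∘g is differentiable at p, and f* = exp((log f)') = exp((Pr f)'/(Pr f)).) -/

import Mathlib

/-- Complex-variable case of Theorems 4 and 5: for `g : ℂ → ℂ` continuous at `p`, `g` is
complex-differentiable at `p` iff `exp ∘ g` is, and then `g'(p) = (exp∘g)'(p) / exp (g p)`. -/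
theorem star_differentiability_complex (g : ℂ → ℂ) (p : ℂ) (hg : ContinuousAt g p) :
    (DifferentiableAt ℂ g p ↔ DifferentiableAt ℂ (fun z => Complex.exp (g z)) p) ∧
    (DifferentiableAt ℂ g p →
      deriv g p = deriv (fun z => Complex.exp (g z)) p / Complex.exp (g p)) := by
  have hexp : HasStrictDerivAt Complex.exp (Complex.exp (g p)) (g p) :=
    Complex.hasStrictDerivAt_exp (g p)
  have hne : Complex.exp (g p) ≠ 0 := Complex.exp_ne_zero _
  constructor
  · constructor
    · exact fun h => h.cexp
    · intro h
      set L := hexp.localInverse Complex.exp _ _ hne with hL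
      have hLd : DifferentiableAt ℂ L (Complex.exp (g p)) :=
        (HasStrictDerivAt.hasDerivAt (hexp.to_localInverse hne)).differentiableAt
      have hev : ∀ᶠ z in nhds p, L (Complex.exp (g z)) = g z :=
        hg.eventually ((hexp.hasStrictFDerivAt_equiv hne).eventually_left_inverse)
      have hD : DifferentiableAt ℂ (fun z => L (Complex.exp (g z))) p := hLd.comp p h
      exact hD.congr_of_eventuallyEq (Filter.EventuallyEq.symm hev)
  · intro h
    have hd : HasDerivAt (fun z => Complex.exp (g z)) (Complex.exp (g p) * deriv g p) p :=
      h.hasDerivAt.cexp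
    rw [hd.deriv]
    field_simp
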